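/- Let C be a circuit of the avoidance transversal matroid M = ([n], r) with presentation (S_1,…,S_k), and let φ(M) be the transversal q-matroid on F_q^n with presentation (φ(S_1),…,φ(S_k)). Then φ(C) is a cyclic space of φ(M): φ(C) is dependent in φ(M), but every hyperplane (codimension-1 subspace) of φ(C) is independent in φ(M). -/

import Mathlib

open Submodule

/-- `X` has an avoidance transversal of the family `A`: an injection `f` from `X`
into the index type with `x ∉ A (f x)` for all `x ∈ X`. -/
def AvoidsT {α ι : Type*} (A : ι → Set α) (X : Finset α) : Prop :=
  ∃ f : {x // x ∈ X} → ι, Function.Injective f ∧ ∀ x : {x // x ∈ X}, (x : α) ∉ A (f x)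

/-- The rank function of the avoidance transversal matroid with presentation `A`:
the maximum size of a subset of `X` admitting an avoidance transversal. -/
noncomputable def atRank {α ι : Type*} (A : ι → Set α) (X : Finset α) : ℕ :=
  sSup {m | ∃ Y : Finset α, Y ⊆ X ∧ AvoidsT A Y ∧ Y.card = m}

/-- `W` is a partial q-transversal of the family of subspaces `X`: every linear
basis of `W` admits an avoidance transversal of `X`. These are the independent
spaces of the transversal q-matroid with presentation `X`. -/
def IsPartialQT {𝔽 V ι : Type*} [Field 𝔽] [AddCommGroup V] [Module 𝔽 V]
    (X : ι → Submodule 𝔽 V) (W : Submodule 𝔽 V) : Prop :=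
  ∀ β : Finset V, (β : Set V) ⊆ (W : Set V) →
    LinearIndependent 𝔽 (fun b : {x // x ∈ β} => (b : V)) →
    span 𝔽 (β : Set V) = W →
    AvoidsT (fun i => ((X i : Submodule 𝔽 V) : Set V)) β

/-- The rank function of the transversal q-matroid with presentation `X`. -/
noncomputable def qtRank {𝔽 V ι : Type*} [Field 𝔽] [AddCommGroup V] [Module 𝔽 V]
    (X : ι → Submodule 𝔽 V) (W : Submodule 𝔽 V) : ℕ :=
  sSup {d | ∃ U : Submodule 𝔽 V, U ≤ W ∧ IsPartialQT X U ∧ Module.finrank 𝔽 U = d}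

/-- The coordinate subspace `φ(S) = span {e_i : i ∈ S}` of `𝔽^n`. -/
def coordSub (𝔽 : Type*) [Field 𝔽] {n : ℕ} (S : Set (Fin n)) : Submodule 𝔽 (Fin n → 𝔽) :=
  span 𝔽 ((fun i => Pi.single i (1 : 𝔽)) '' S)

/-- The support of a vector: the set of indices of its nonzero coordinates. -/
def suppS {𝔽 : Type*} [Field 𝔽] {n : ℕ} (v : Fin n → 𝔽) : Set (Fin n) := {j | v j ≠ 0}

/-- The standard basis vectors, with a fixed decidability instance. -/
def eV (𝔽 : Type*) [Field 𝔽] {n : ℕ} : Fin n → (Fin n → 𝔽) := fun i => Pi.single i 1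

section aux
variable {𝔽 : Type*} [Field 𝔽] {n : ℕ}

lemma coordSub_eq (U : Set (Fin n)) : coordSub 𝔽 U = span 𝔽 (eV 𝔽 '' U) := rfl

lemma eV_apply_self (i : Fin n) : eV 𝔽 i i = 1 := Pi.single_eq_same i 1

lemma eV_apply_ne {i j : Fin n} (h : j ≠ i) : eV 𝔽 i j = 0 := Pi.single_eq_of_ne h 1

lemma li_single : LinearIndependent 𝔽 (eV 𝔽 (n := n)) := by
  have h := (Pi.basisFun 𝔽 (Fin n)).linearIndependent
  have e : ⇑(Pi.basisFun 𝔽 (Fin n)) = eV 𝔽 (n := n) := by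
    funext i
    rw [Pi.basisFun_apply]
    rfl
  rwa [e] at h

lemma single_inj : Function.Injective (eV 𝔽 (n := n)) := by
  intro i j h
  by_contra hij
  have h2 := congrFun h i
  rw [eV_apply_self, eV_apply_ne hij] at h2
  exact one_ne_zero h2

lemma suppS_eV (i : Fin n) : suppS (eV 𝔽 i) = {i} := by
  ext j
  simp only [suppS, Set.mem_setOf_eq, Set.mem_singleton_iff]
  constructor
  · intro h; by_contra hj; exact h (eV_apply_ne hj)
  · rintro rfl; rw [eV_apply_self]; exact one_ne_zero

lemma mem_coordSub_iff {U : Set (Fin n)} {v : Fin n → 𝔽} :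
    v ∈ coordSub 𝔽 U ↔ suppS v ⊆ U := by
  classical
  constructor
  · intro hv
    have hle : coordSub 𝔽 U ≤ Submodule.pi Uᶜ (fun _ => (⊥ : Submodule 𝔽 𝔽)) := by
      rw [coordSub_eq, span_le]
      rintro _ ⟨i, hi, rfl⟩ j hj
      have hne : j ≠ i := fun h => hj (h ▸ hi)
      rw [eV_apply_ne hne]; exact zero_mem _
    intro j hj
    by_contra hjU
    exact hj (hle hv j hjU)
  · intro hsupp
    have hv : v = ∑ j : Fin n, Pi.single j (v j) := (Finset.univ_sum_single v).symm
    rw [hv]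
    refine sum_mem fun j _ => ?_
    by_cases hj : v j = 0
    · simp [hj]
    · have h1 : Pi.single j (v j) = v j • eV 𝔽 j := by
        funext m
        rcases eq_or_ne m j with rfl | hm
        · simp [eV_apply_self]
        · simp [Pi.single_eq_of_ne hm, eV_apply_ne hm]
      rw [h1]
      exact smul_mem _ _ (subset_span (Set.mem_image_of_mem _ (hsupp hj)))

lemma li_coord_set (T : Set (Fin n)) :
    LinearIndependent 𝔽 ((↑) : (eV 𝔽 '' T) → (Fin n → 𝔽)) :=
  LinearIndepOn.id_image (s := T) ((li_single (𝔽 := 𝔽)).comp _ Subtype.val_injective)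

lemma li_coord_finset [DecidableEq (Fin n → 𝔽)] (T : Finset (Fin n)) :
    LinearIndependent 𝔽
      (fun b : {x // x ∈ T.image (eV 𝔽)} => (b : Fin n → 𝔽)) := by
  have h := li_coord_set (𝔽 := 𝔽) (T : Set (Fin n))
  rw [← Finset.coe_image] at h
  exact h

set_option maxHeartbeats 1000000 in
lemma finrank_coordSub [DecidableEq (Fin n → 𝔽)] (T : Finset (Fin n)) :
    Module.finrank 𝔽 (coordSub 𝔽 (T : Set (Fin n))) = T.card := by
  have h1 : coordSub 𝔽 (T : Set (Fin n)) = span 𝔽 ((T.image (eV 𝔽) : Finset _) : Set (Fin n → 𝔽)) := by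
    rw [Finset.coe_image, coordSub_eq]
  have hr := finrank_span_finset_eq_card (li_coord_finset (𝔽 := 𝔽) T)
  rw [h1, hr, Finset.card_image_of_injective _ single_inj]

end aux

set_option maxHeartbeats 1000000 in
/-- if `C` is a circuit of the avoidance transversal matroid, then
`φ(C)` is a cyclic space of the transversal q-matroid: `φ(C)` is dependent, but
every hyperplane of `φ(C)` is independent. -/
theorem stmt10 {𝔽 : Type*} [Field 𝔽] [Fintype 𝔽] {n k : ℕ} [DecidableEq (Fin n)]
    (S : Fin k → Set (Fin n)) (C : Finset (Fin n))
    (hdep : ¬ AvoidsT S C)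
    (hmin : ∀ x ∈ C, AvoidsT S (C.erase x)) :
    ¬ IsPartialQT (fun i => coordSub 𝔽 (S i)) (coordSub 𝔽 (C : Set (Fin n)))
    ∧ ∀ H : Submodule 𝔽 (Fin n → 𝔽), H ≤ coordSub 𝔽 (C : Set (Fin n)) →
        Module.finrank 𝔽 H + 1 = Module.finrank 𝔽 (coordSub 𝔽 (C : Set (Fin n))) →
        IsPartialQT (fun i => coordSub 𝔽 (S i)) H := by
  classical
  have hCne : C.Nonempty := by
    rcases C.eq_empty_or_nonempty with h | h
    · exfalso; apply hdep; subst h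
      exact ⟨fun x => absurd x.2 (Finset.notMem_empty _),
        fun a b _ => absurd a.2 (Finset.notMem_empty _),
        fun a => absurd a.2 (Finset.notMem_empty _)⟩
    · exact h
  constructor
  · -- φ(C) is dependent
    intro hpqt
    have hmem : ∀ x : {x // x ∈ C}, eV 𝔽 (x : Fin n) ∈ C.image (eV 𝔽) :=
      fun x => Finset.mem_image_of_mem _ x.2
    have hsub : ((C.image (eV 𝔽) : Finset _) : Set (Fin n → 𝔽)) ⊆
        (coordSub 𝔽 (C : Set (Fin n)) : Set (Fin n → 𝔽)) := by
      intro v hv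
      rw [Finset.mem_coe, Finset.mem_image] at hv
      obtain ⟨i, hi, rfl⟩ := hv
      exact subset_span (Set.mem_image_of_mem _ hi)
    have hspan : span 𝔽 ((C.image (eV 𝔽) : Finset _) : Set (Fin n → 𝔽)) =
        coordSub 𝔽 (C : Set (Fin n)) := by
      rw [Finset.coe_image, coordSub_eq]
    obtain ⟨g, hginj, hgav⟩ := hpqt (C.image (eV 𝔽)) hsub (li_coord_finset C) hspan
    apply hdep
    refine ⟨fun x => g ⟨eV 𝔽 (x : Fin n), hmem x⟩, ?_, ?_⟩
    · intro a b hab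
      have h1 := hginj hab
      have h2 : eV 𝔽 (a : Fin n) = eV 𝔽 (b : Fin n) := congrArg Subtype.val h1
      exact Subtype.ext (single_inj h2)
    · intro x hx
      apply hgav ⟨eV 𝔽 (x : Fin n), hmem x⟩
      show eV 𝔽 (x : Fin n) ∈ coordSub 𝔽 (S _)
      rw [mem_coordSub_iff, suppS_eV]
      exact Set.singleton_subset_iff.mpr hx
  · -- every hyperplane of φ(C) is independent
    intro H hle hrank β hβsub hβli hβspan
    have hβli' : LinearIndependent 𝔽 (fun x : {v : Fin n → 𝔽 // v ∈ (β : Set (Fin n → 𝔽))} => x.1) := hβli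
    have hβcard : Module.finrank 𝔽 H = β.card := by
      rw [← hβspan, finrank_span_finset_eq_card hβli]
    have hCcard : β.card + 1 = C.card := by
      rw [← hβcard, hrank, finrank_coordSub]
    -- finite supports
    set suppF : (Fin n → 𝔽) → Finset (Fin n) :=
      fun v => Finset.univ.filter (fun j => v j ≠ 0) with hsuppFdef
    have hsuppF : ∀ v : Fin n → 𝔽, (suppF v : Set (Fin n)) = suppS v := by
      intro v; ext j; simp [hsuppFdef, suppS]
    have hsuppC : ∀ b ∈ β, suppF b ⊆ C := by
      intro b hb j hj
      have h1 : suppS b ⊆ (C : Set (Fin n)) := mem_coordSub_iff.mp (hle (hβsub hb))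
      have h2 : j ∈ suppS b := by rw [← hsuppF]; exact_mod_cast hj
      exact_mod_cast h1 h2
    set t : {b // b ∈ β} → Finset (Fin k) :=
      fun b => Finset.univ.filter (fun i => ¬ suppS (b : Fin n → 𝔽) ⊆ S i) with htdef
    have hall : ∀ s : Finset {b // b ∈ β}, s.card ≤ (s.biUnion t).card := by
      intro s
      set γ : Finset (Fin n → 𝔽) := s.image Subtype.val with hγdef
      have hγcard : γ.card = s.card := Finset.card_image_of_injective _ Subtype.val_injective
      set TF : Finset (Fin n) := γ.biUnion suppF with hTFdef
      have hγβ : ∀ v ∈ γ, v ∈ β := by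
        intro v hv
        rw [hγdef, Finset.mem_image] at hv
        obtain ⟨b', _, rfl⟩ := hv
        exact b'.2
      have hTFC : TF ⊆ C := by
        intro j hj
        rw [hTFdef, Finset.mem_biUnion] at hj
        obtain ⟨v, hvγ, hjv⟩ := hj
        exact hsuppC v (hγβ v hvγ) hjv
      have hγli : LinearIndependent 𝔽 (fun x : {v : Fin n → 𝔽 // v ∈ (γ : Set (Fin n → 𝔽))} => x.1) := by
        refine LinearIndepOn.mono (s := (β : Set (Fin n → 𝔽))) (v := id) hβli' ?_
        intro v hv
        exact hγβ v hv
      have hspanγ : span 𝔽 (γ : Set (Fin n → 𝔽)) ≤ coordSub 𝔽 (TF : Set (Fin n)) := by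
        rw [span_le]
        intro v hv
        have hvγ : v ∈ γ := hv
        have h1 : (suppF v : Set (Fin n)) ⊆ (TF : Set (Fin n)) := by
          exact_mod_cast Finset.subset_biUnion_of_mem suppF hvγ
        have h2 : suppS v ⊆ (TF : Set (Fin n)) := by rw [← hsuppF]; exact h1
        exact mem_coordSub_iff.mpr h2
      have hγTF : γ.card ≤ TF.card := by
        have h1 : Module.finrank 𝔽 (span 𝔽 (γ : Set (Fin n → 𝔽))) = γ.card :=
          finrank_span_finset_eq_card hγli
        have h2 := Submodule.finrank_mono (M := Fin n → 𝔽) (R := 𝔽) hspanγ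
        rw [h1, finrank_coordSub] at h2
        exact h2
      -- choose x
      obtain ⟨x, hxC, hcard⟩ : ∃ x ∈ C, γ.card ≤ (TF.erase x).card := by
        by_cases hTFeq : TF = C
        · obtain ⟨x, hx⟩ := hCne
          refine ⟨x, hx, ?_⟩
          rw [Finset.card_erase_of_mem (hTFeq ▸ hx), hTFeq]
          have hsβ : s.card ≤ β.card := by
            have := Finset.card_le_univ s
            rwa [Fintype.card_coe] at this
          omega
        · obtain ⟨x, hxC, hxTF⟩ := Finset.exists_of_ssubset (hTFC.ssubset_of_ne hTFeq)
          refine ⟨x, hxC, ?_⟩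
          rw [Finset.erase_eq_of_notMem hxTF]
          exact hγTF
      have hmemCE : ∀ j ∈ TF.erase x, j ∈ C.erase x := by
        intro j hj
        rw [Finset.mem_erase] at hj ⊢
        exact ⟨hj.1, hTFC hj.2⟩
      obtain ⟨g, hginj, hgav⟩ := hmin x hxC
      have hF : ∀ j (hj : j ∈ TF.erase x), g ⟨j, hmemCE j hj⟩ ∈ s.biUnion t := by
        intro j hj
        have hjTF : j ∈ TF := (Finset.mem_erase.mp hj).2
        rw [hTFdef, Finset.mem_biUnion] at hjTF
        obtain ⟨v, hvγ, hjv⟩ := hjTF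
        rw [hγdef, Finset.mem_image] at hvγ
        obtain ⟨b', hb's, rfl⟩ := hvγ
        rw [Finset.mem_biUnion]
        refine ⟨b', hb's, ?_⟩
        rw [htdef, Finset.mem_filter]
        refine ⟨Finset.mem_univ _, ?_⟩
        intro hsubS
        have hjsupp : j ∈ suppS (b' : Fin n → 𝔽) := by
          rw [← hsuppF]; exact_mod_cast hjv
        exact hgav ⟨j, hmemCE j hj⟩ (hsubS hjsupp)
      have hinj2 : (TF.erase x).card ≤ (s.biUnion t).card := by
        have hcardle : Fintype.card {j // j ∈ TF.erase x} ≤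
            Fintype.card {i // i ∈ s.biUnion t} := by
          refine Fintype.card_le_of_injective
            (fun j => ⟨g ⟨j.1, hmemCE j.1 j.2⟩, hF j.1 j.2⟩) ?_
          intro a b hab
          have h1 : g ⟨a.1, hmemCE a.1 a.2⟩ = g ⟨b.1, hmemCE b.1 b.2⟩ :=
            congrArg Subtype.val hab
          have h2 := hginj h1
          have h3 := Subtype.ext_iff.mp h2
          exact Subtype.ext h3
        rwa [Fintype.card_coe, Fintype.card_coe] at hcardle
      calc s.card = γ.card := hγcard.symm
        _ ≤ (TF.erase x).card := hcard
        _ ≤ (s.biUnion t).card := hinj2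
    obtain ⟨f, hfinj, hft⟩ := (Finset.all_card_le_biUnion_card_iff_exists_injective t).mp hall
    refine ⟨f, hfinj, ?_⟩
    intro b hmemb
    have h1 := hft b
    rw [htdef, Finset.mem_filter] at h1
    exact h1.2 (mem_coordSub_iff.mp hmemb)
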